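/- arXiv:2107.09696 — 2 statements merged into one kernel-verified Lean document; each statement's English description precedes it below -/
import Mathlib

section
/- Let 𝒮 be a 1-nested compatible set pair system on X and let (S,H) ∈ 𝒮 with H ≠ ∅. Then the set M = {(S',H') ∈ 𝒮 : (S,H) < (S',H') and H' ≠ H} has a unique ≤-minimal element (S₂,H₂). Moreover, S ∪ H ⊆ S₂, and every (S₁,H₁) ∈ 𝒮 with (S,H) < (S₁,H₁) < (S₂,H₂) satisfies S ⊊ S₁ and H₁ = H. -/
open Set

variable {X : Type*}

/-- A set pair on `X`: an ordered pair `(S,H)` of subsets of `X` with `S ≠ ∅` and `S ∩ H = ∅`. -/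
def IsSetPair (p : Set X × Set X) : Prop :=
  p.1 ≠ ∅ ∧ p.1 ∩ p.2 = ∅

/-- A set pair system on `X`: a collection of set pairs on `X`. -/
def IsSPS (𝒮 : Set (Set X × Set X)) : Prop :=
  ∀ p ∈ 𝒮, IsSetPair p

/-- The strict relation `<` on set pairs: `(S₁,H₁) < (S₂,H₂)` iff they are distinct and
(a) `S₁ ∪ H₁ ⊆ S₂`, or (b) `S₁ ∪ H₁ ⊆ H₂`, or (c) `S₁ ⊊ S₂` and `H₁ = H₂ ≠ ∅`. -/
def splt (p q : Set X × Set X) : Prop :=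
  p ≠ q ∧ (p.1 ∪ p.2 ⊆ q.1 ∨ p.1 ∪ p.2 ⊆ q.2 ∨ (p.1 ⊂ q.1 ∧ p.2 = q.2 ∧ q.2 ≠ ∅))

/-- `(S₁,H₁) ≤ (S₂,H₂)` iff `(S₁,H₁) < (S₂,H₂)` or `(S₁,H₁) = (S₂,H₂)`. -/
def sple (p q : Set X × Set X) : Prop :=
  splt p q ∨ p = q

/-- Exactly one of four propositions holds. -/
def ExactlyOne4 (a b c d : Prop) : Prop :=
  (a ∧ ¬b ∧ ¬c ∧ ¬d) ∨ (¬a ∧ b ∧ ¬c ∧ ¬d) ∨ (¬a ∧ ¬b ∧ c ∧ ¬d) ∨ (¬a ∧ ¬b ∧ ¬c ∧ d)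

/-- Exactly one of three propositions holds. -/
def ExactlyOne3 (a b c : Prop) : Prop :=
  (a ∧ ¬b ∧ ¬c) ∨ (¬a ∧ b ∧ ¬c) ∨ (¬a ∧ ¬b ∧ c)

/-- A 1-nested compatible set pair system on `X`: a set pair system satisfying (NC1)–(NC5). -/
def OneNestedCompatible (𝒮 : Set (Set X × Set X)) : Prop :=
  IsSPS 𝒮 ∧
  -- (NC1)
  (((Set.univ : Set X), (∅ : Set X)) ∈ 𝒮) ∧
  -- (NC2)
  (∀ x : X, (({x} : Set X), (∅ : Set X)) ∈ 𝒮) ∧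
  -- (NC3)
  (∀ p ∈ 𝒮, p.2 ≠ ∅ → ((p.2, (∅ : Set X)) : Set X × Set X) ∈ 𝒮) ∧
  -- (NC4)
  (∀ p ∈ 𝒮, ∀ q ∈ 𝒮, p ≠ q →
    ExactlyOne4 (splt p q) (splt q p)
      ((p.1 ∪ p.2) ∩ (q.1 ∪ q.2) = ∅)
      (p.1 ∩ q.1 = ∅ ∧ p.2 = q.2 ∧ p.2 ≠ ∅)) ∧
  -- (NC5)
  (¬ ∃ p ∈ 𝒮, ∃ q ∈ 𝒮, ∃ r ∈ 𝒮,
    p.2 = q.2 ∧ q.2 = r.2 ∧ p.2 ≠ ∅ ∧ p.1 ∩ q.1 = ∅ ∧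
    (p.1 ∪ q.1 ⊆ r.1 ∨ (p.1 ∪ q.1) ∩ r.1 = ∅))

/-- `p` covers `q` in the partial order `(𝒮,≤)`: an arc from `p` to `q`
in the Hasse diagram `D(𝒮)`; `p` is a parent of `q`, and `q` is a child of `p`. -/
def SPCovers (𝒮 : Set (Set X × Set X)) (p q : Set X × Set X) : Prop :=
  p ∈ 𝒮 ∧ q ∈ 𝒮 ∧ splt q p ∧ ¬ ∃ r ∈ 𝒮, splt q r ∧ splt r p

/-- `L` is the directed path `P(S,H)` in `D(𝒮)` associated with `(S,H) ∈ 𝒮`, `H ≠ ∅`: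
a sequence `(q₀,…,q_m)` of elements of `𝒮` with `m ≥ 2` in which `q_j` covers `q_{j+1}`,
such that `q_m = (H,∅)`, every interior `q_j` (`1 ≤ j ≤ m-1`) has second component `H`,
`q_i = (S,H)` for some `1 ≤ i ≤ m-1`, and the first element `q₀ = (S₊,H₊)` satisfies
`S ∪ H ⊆ S₊` and `H₊ ≠ H`. -/
def IsSPPath (𝒮 : Set (Set X × Set X)) (S H : Set X) (L : List (Set X × Set X)) : Prop :=
  3 ≤ L.length ∧
  List.Chain' (fun a b => SPCovers 𝒮 a b) L ∧
  L.getLast? = some ((H, (∅ : Set X)) : Set X × Set X) ∧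
  (∀ i : ℕ, ∀ p : Set X × Set X, 1 ≤ i → i + 1 < L.length → L[i]? = some p → p.2 = H) ∧
  (∃ i : ℕ, 1 ≤ i ∧ i + 1 < L.length ∧ L[i]? = some ((S, H) : Set X × Set X)) ∧
  (∃ p : Set X × Set X, L.head? = some p ∧ S ∪ H ⊆ p.1 ∧ p.2 ≠ H)

/-- A directed path in the Hasse diagram `D(𝒮)`: a sequence of at least two elements of `𝒮`
in which each element covers the next. -/
def IsDirPath (𝒮 : Set (Set X × Set X)) (L : List (Set X × Set X)) : Prop :=
  2 ≤ L.length ∧ List.Chain' (fun a b => SPCovers 𝒮 a b) L ∧ ∀ p ∈ L, p ∈ 𝒮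



private lemma sub_disj {A B : Set X} (h1 : A ⊆ B) (h2 : A ∩ B = ∅) : A = ∅ := by
  rw [Set.inter_eq_self_of_subset_left h1] at h2; exact h2

private lemma splt_asymm {p q : Set X × Set X} (hp : IsSetPair p) (hq : IsSetPair q)
    (h1 : splt p q) (h2 : splt q p) : False := by
  obtain ⟨hp1, hpd⟩ := hp
  obtain ⟨hq1, hqd⟩ := hq
  obtain ⟨hpq, D1⟩ := h1
  obtain ⟨hqp, D2⟩ := h2
  rcases D1 with hA | hB | hC <;> rcases D2 with hA' | hB' | hC'
  · have h11 : p.1 = q.1 :=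
      Subset.antisymm (fun x hx => hA (Or.inl hx)) (fun x hx => hA' (Or.inl hx))
    have hq2 : q.2 = ∅ := sub_disj (fun x hx => h11 ▸ hA' (Or.inr hx)) (by rwa [Set.inter_comm])
    have hp2 : p.2 = ∅ := sub_disj (fun x hx => h11 ▸ (hA (Or.inr hx))) (by rwa [Set.inter_comm])
    exact hpq (Prod.ext h11 (hp2.trans hq2.symm))
  · exact hp1 (sub_disj (fun x hx => hB' (Or.inl (hA (Or.inl hx)))) hpd)
  · exact hC'.1.not_subset (fun x hx => hA (Or.inl hx))
  · exact hq1 (sub_disj (fun x hx => hB (Or.inl (hA' (Or.inl hx)))) hqd)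
  · exact hp1 (sub_disj (fun x hx => hB' (Or.inr (hB (Or.inl hx)))) hpd)
  · exact hp1 (sub_disj (fun x hx => hC'.2.1.symm ▸ hB (Or.inl hx)) hpd)
  · exact hC.1.not_subset (fun x hx => hA' (Or.inl hx))
  · exact hq1 (sub_disj (fun x hx => hC.2.1 ▸ hB' (Or.inl hx)) hqd)
  · exact hC.1.not_subset hC'.1.subset

private lemma splt_trans {p q r : Set X × Set X} (hp : IsSetPair p) (hq : IsSetPair q)
    (h1 : splt p q) (h2 : splt q r) : splt p r := by
  constructor
  · rintro rfl
    exact splt_asymm hp hq h1 h2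
  · rcases h1.2 with hA | hB | hC <;> rcases h2.2 with hA' | hB' | hC'
    · exact Or.inl (fun x hx => hA' (Or.inl (hA hx)))
    · exact Or.inr (Or.inl (fun x hx => hB' (Or.inl (hA hx))))
    · exact Or.inl (fun x hx => hC'.1.subset (hA hx))
    · exact Or.inl (fun x hx => hA' (Or.inr (hB hx)))
    · exact Or.inr (Or.inl (fun x hx => hB' (Or.inr (hB hx))))
    · exact Or.inr (Or.inl (fun x hx => hC'.2.1 ▸ hB hx))
    · exact Or.inl (fun x hx => hA' (hx.elim (fun hh => Or.inl (hC.1.subset hh))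
        (fun hh => Or.inr (hC.2.1 ▸ hh))))
    · exact Or.inr (Or.inl (fun x hx => hB' (hx.elim (fun hh => Or.inl (hC.1.subset hh))
        (fun hh => Or.inr (hC.2.1 ▸ hh)))))
    · exact Or.inr (Or.inr ⟨hC.1.trans hC'.1, hC.2.1.trans hC'.2.1, hC'.2.2⟩)

private lemma exists_minimal {X : Type*} [Fintype X] {𝒮 : Set (Set X × Set X)} (hS : IsSPS 𝒮) :
    ∀ n : ℕ, ∀ M : Set (Set X × Set X), M.ncard ≤ n → M ⊆ 𝒮 → M.Nonempty →
      ∃ q ∈ M, ∀ r ∈ M, ¬ splt r q := by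
  intro n
  induction n with
  | zero =>
    intro M hcard hM hne
    exact absurd ((Set.ncard_pos (Set.toFinite M)).2 hne) (by omega)
  | succ n ih =>
    intro M hcard hM hne
    obtain ⟨a, ha⟩ := hne
    by_cases hmin : ∀ r ∈ M, ¬ splt r a
    · exact ⟨a, ha, hmin⟩
    · push_neg at hmin
      obtain ⟨b, hb, hba⟩ := hmin
      set M' : Set (Set X × Set X) := {r ∈ M | splt r a} with hM'
      have hM'sub : M' ⊆ M := fun s hs => hs.1
      have haM' : a ∉ M' := fun hr => hr.2.1 rfl
      have hss : M' ⊂ M := Set.ssubset_iff_subset_ne.mpr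
        ⟨hM'sub, fun hcon => haM' (hcon ▸ ha)⟩
      have hcard' : M'.ncard ≤ n := by
        have := Set.ncard_lt_ncard hss (Set.toFinite M)
        omega
      obtain ⟨q, hqM', hqmin⟩ := ih M' hcard' (hM'sub.trans hM) ⟨b, hb, hba⟩
      refine ⟨q, hqM'.1, ?_⟩
      intro s hs hsq
      exact hqmin s ⟨hs, splt_trans (hS s (hM hs)) (hS q (hM hqM'.1)) hsq hqM'.2⟩ hsq


/-- If `𝒮` is 1-nested compatible and `(S,H) ∈ 𝒮` with `H ≠ ∅`, then the set
`M = {(S',H') ∈ 𝒮 : (S,H) < (S',H') and H' ≠ H}` has a unique `≤`-minimal element `(S₂,H₂)`;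
moreover `S ∪ H ⊆ S₂` and every `(S₁,H₁) ∈ 𝒮` with `(S,H) < (S₁,H₁) < (S₂,H₂)` satisfies
`S ⊊ S₁` and `H₁ = H`. -/
theorem unique_minimal_above {X : Type*} [Fintype X] [Nonempty X]
    (𝒮 : Set (Set X × Set X)) (h : OneNestedCompatible 𝒮)
    (S H : Set X) (hmem : ((S, H) : Set X × Set X) ∈ 𝒮) (hH : H ≠ ∅) :
    ∃ q ∈ 𝒮, (splt ((S, H) : Set X × Set X) q ∧ q.2 ≠ H) ∧
      (∀ r ∈ 𝒮, splt ((S, H) : Set X × Set X) r ∧ r.2 ≠ H → sple r q → r = q) ∧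
      (∀ q' ∈ 𝒮, (splt ((S, H) : Set X × Set X) q' ∧ q'.2 ≠ H) →
        (∀ r ∈ 𝒮, splt ((S, H) : Set X × Set X) r ∧ r.2 ≠ H → sple r q' → r = q') →
        q' = q) ∧
      S ∪ H ⊆ q.1 ∧
      (∀ p ∈ 𝒮, splt ((S, H) : Set X × Set X) p → splt p q → S ⊂ p.1 ∧ p.2 = H) := by
  obtain ⟨hSPS, hNC1, _, hNC3, hNC4, _⟩ := h
  have hSne : S ≠ ∅ := (hSPS _ hmem).1
  set M : Set (Set X × Set X) := {r ∈ 𝒮 | splt (S, H) r ∧ r.2 ≠ H} with hMdef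
  have hMsub : M ⊆ 𝒮 := fun r hr => hr.1
  have hMne : M.Nonempty := by
    refine ⟨(Set.univ, ∅), hNC1, ⟨?_, Or.inl (Set.subset_univ _)⟩, fun hcon => hH hcon.symm⟩
    intro hcon
    exact hH (congrArg Prod.snd hcon)
  obtain ⟨q, hqM, hqmin⟩ := exists_minimal hSPS M.ncard M le_rfl hMsub hMne
  have key1 : ∀ q' ∈ M, (∀ r ∈ M, ¬ splt r q') → S ∪ H ⊆ q'.1 := by
    rintro q' ⟨hq'S, ⟨hne', hcase⟩, hq'H⟩ hmin
    rcases hcase with hA | hB | hC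
    · exact hA
    · exfalso
      have hq2ne : q'.2 ≠ ∅ := by
        intro h0
        rw [h0] at hB
        exact hSne (Set.subset_empty_iff.1 (fun x hx => hB (Or.inl hx)))
      have hrS : ((q'.2, ∅) : Set X × Set X) ∈ 𝒮 := hNC3 q' hq'S hq2ne
      have hrM : ((q'.2, ∅) : Set X × Set X) ∈ M := by
        refine ⟨hrS, ⟨?_, Or.inl hB⟩, fun hcon => hH hcon.symm⟩
        intro hcon
        exact hH (congrArg Prod.snd hcon)
      have hrq : splt ((q'.2, ∅) : Set X × Set X) q' := by
        refine ⟨?_, Or.inr (Or.inl (by simp))⟩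
        intro hcon
        exact hq2ne (congrArg Prod.snd hcon).symm
      exact hmin _ hrM hrq
    · exact absurd hC.2.1.symm hq'H
  have hsub : S ∪ H ⊆ q.1 := key1 q hqM hqmin
  refine ⟨q, hqM.1, hqM.2, ?_, ?_, hsub, ?_⟩
  · intro r hrS hrc hle
    have hle' : splt r q ∨ r = q := hle
    rcases hle' with hlt | rfl
    · exact absurd hlt (hqmin r ⟨hrS, hrc⟩)
    · rfl
  · intro q' hq'S hq'c hq'min
    by_contra hne'
    have hq'M : q' ∈ M := ⟨hq'S, hq'c⟩
    have hq'min' : ∀ r ∈ M, ¬ splt r q' := by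
      rintro r ⟨hrS, hrc⟩ hrq
      exact hrq.1 (hq'min r hrS hrc (Or.inl hrq))
    have hsub' : S ∪ H ⊆ q'.1 := key1 q' hq'M hq'min'
    obtain ⟨x, hx⟩ := Set.nonempty_iff_ne_empty.2 hSne
    have h4 := hNC4 q hqM.1 q' hq'S (fun hcon => hne' hcon.symm)
    unfold ExactlyOne4 at h4
    rcases h4 with ⟨h1, _, _, _⟩ | ⟨_, h2, _, _⟩ | ⟨_, _, h3, _⟩ | ⟨_, _, _, h4⟩
    · exact hq'min' q hqM h1
    · exact hqmin q' hq'M h2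
    · have hmemx : x ∈ (q.1 ∪ q.2) ∩ (q'.1 ∪ q'.2) :=
        ⟨Or.inl (hsub (Or.inl hx)), Or.inl (hsub' (Or.inl hx))⟩
      rw [h3] at hmemx
      exact hmemx
    · have hmemx : x ∈ q.1 ∩ q'.1 := ⟨hsub (Or.inl hx), hsub' (Or.inl hx)⟩
      rw [h4.1] at hmemx
      exact hmemx
  · intro p hpS hp1 hp2
    rcases hp1.2 with hA | hB | hC
    · exfalso
      by_cases hpH : p.2 = H
      · obtain ⟨y, hy⟩ := Set.nonempty_iff_ne_empty.2 hH
        have hyy : y ∈ p.1 ∩ p.2 := ⟨hA (Or.inr hy), by rw [hpH]; exact hy⟩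
        rw [(hSPS p hpS).2] at hyy
        exact hyy
      · exact hqmin p ⟨hpS, hp1, hpH⟩ hp2
    · exfalso
      have hp2ne : p.2 ≠ ∅ := by
        intro h0
        rw [h0] at hB
        exact hSne (Set.subset_empty_iff.1 (fun x hx => hB (Or.inl hx)))
      have hrS : ((p.2, ∅) : Set X × Set X) ∈ 𝒮 := hNC3 p hpS hp2ne
      have hrM : ((p.2, ∅) : Set X × Set X) ∈ M := by
        refine ⟨hrS, ⟨?_, Or.inl hB⟩, fun hcon => hH hcon.symm⟩
        intro hcon
        exact hH (congrArg Prod.snd hcon)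
      have hrp : splt ((p.2, ∅) : Set X × Set X) p := by
        refine ⟨?_, Or.inr (Or.inl (by simp))⟩
        intro hcon
        exact hp2ne (congrArg Prod.snd hcon).symm
      have hrq : splt ((p.2, ∅) : Set X × Set X) q :=
        splt_trans (hSPS _ hrS) (hSPS _ hpS) hrp hp2
      exact hqmin _ hrM hrq
    · exact ⟨hC.1, hC.2.1.symm⟩
end

section
/- Let 𝒮 be a 1-nested compatible set pair system on X and let (S,H), (S',H) ∈ 𝒮 with H ≠ ∅. Suppose the directed paths P(S,H) = ((S₊,H₊),(S_k,H),…,(S₁,H),(H,∅)) and P(S',H) = ((S'₊,H'₊),(S'_l,H),…,(S'₁,H),(H,∅)) do not coincide. Then S_i ∩ S'_j = ∅ for all 1 ≤ i ≤ k and 1 ≤ j ≤ l, and the first elements coincide: (S₊,H₊) = (S'₊,H'₊). -/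
open Set

variable {X : Type*}

section MyHelpers

variable {𝒮 : Set (Set X × Set X)}

lemma my_wit {A : Set X} (h : A ≠ ∅) : ∃ x, x ∈ A := Set.nonempty_iff_ne_empty.mpr h

/-- elt: proof-free indexing. -/
def elt (L : List (Set X × Set X)) (i : ℕ) : Set X × Set X := L.getD i (∅, ∅)

lemma elt_eq {L : List (Set X × Set X)} {i : ℕ} (hi : i < L.length) :
    elt L i = L[i]'hi := List.getD_eq_getElem L _ hi

lemma splt_sameH {p q : Set X × Set X} {H : Set X}
    (hsps : IsSPS 𝒮) (hp : p ∈ 𝒮) (hq : q ∈ 𝒮)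
    (hpH : p.2 = H) (hqH : q.2 = H) (hH : H ≠ ∅)
    (hs : splt p q) : p.1 ⊂ q.1 := by
  obtain ⟨x, hx⟩ := my_wit hH
  obtain ⟨hp1, hp2⟩ := hsps p hp
  obtain ⟨hq1, hq2⟩ := hsps q hq
  obtain ⟨y, hy⟩ := my_wit hp1
  rcases hs.2 with h1 | h2 | h3
  · exfalso
    have hxq : x ∈ q.1 := h1 (Or.inr (by rw [hpH]; exact hx))
    have : x ∈ q.1 ∩ q.2 := ⟨hxq, by rw [hqH]; exact hx⟩
    rw [hq2] at this; exact this
  · exfalso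
    have hyq : y ∈ q.2 := h2 (Or.inl hy)
    have : y ∈ p.1 ∩ p.2 := ⟨hy, by rw [hpH, ← hqH]; exact hyq⟩
    rw [hp2] at this; exact this
  · exact h3.1

lemma interior_rel (h : OneNestedCompatible 𝒮) {p q : Set X × Set X} {H : Set X}
    (hp : p ∈ 𝒮) (hq : q ∈ 𝒮) (hpH : p.2 = H) (hqH : q.2 = H) (hH : H ≠ ∅)
    (hne : p ≠ q) : p.1 ∩ q.1 = ∅ ∨ p.1 ⊂ q.1 ∨ q.1 ⊂ p.1 := by
  obtain ⟨hsps, -, -, -, hnc4, -⟩ := h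
  obtain ⟨x, hx⟩ := my_wit hH
  rcases hnc4 p hp q hq hne with ⟨h1,-⟩|⟨-,h2,-⟩|⟨-,-,h3,-⟩|⟨-,-,-,h4⟩
  · exact Or.inr (Or.inl (splt_sameH hsps hp hq hpH hqH hH h1))
  · exact Or.inr (Or.inr (splt_sameH hsps hq hp hqH hpH hH h2))
  · exfalso
    have : x ∈ (p.1 ∪ p.2) ∩ (q.1 ∪ q.2) :=
      ⟨Or.inr (by rw [hpH]; exact hx), Or.inr (by rw [hqH]; exact hx)⟩
    rw [h3] at this; exact this
  · exact Or.inl h4.1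

lemma cover_props (h : OneNestedCompatible 𝒮) {r q : Set X × Set X} {H : Set X}
    (hc : SPCovers 𝒮 r q) (hqH : q.2 = H) (hH : H ≠ ∅) :
    q.1 ⊂ r.1 ∧ q.1 ∪ H ⊆ r.1 ∪ r.2 ∧ (r.2 = H ∨ q.1 ∪ H ⊆ r.1) := by
  obtain ⟨hsps, -, -, hnc3, -, -⟩ := h
  obtain ⟨hr, hq, hsplt, hmin⟩ := hc
  obtain ⟨hq1, hq2⟩ := hsps q hq
  obtain ⟨hr1, hr2⟩ := hsps r hr
  obtain ⟨x, hx⟩ := my_wit hH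
  have hxq2 : x ∈ q.2 := by rw [hqH]; exact hx
  have hnb : ¬ (q.1 ∪ q.2 ⊆ r.2) := by
    intro hb
    have hr2ne : r.2 ≠ ∅ := by
      intro he
      have : x ∈ r.2 := hb (Or.inr hxq2)
      rw [he] at this; exact this
    have hmem : ((r.2, (∅ : Set X)) : Set X × Set X) ∈ 𝒮 := hnc3 r hr hr2ne
    apply hmin
    refine ⟨(r.2, ∅), hmem, ⟨?_, Or.inl hb⟩, ⟨?_, Or.inr (Or.inl ?_)⟩⟩
    · intro he
      have : q.2 = ∅ := by rw [he]
      rw [hqH] at this; exact hH this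
    · intro he
      apply hr2ne
      have : ((r.2, (∅ : Set X)) : Set X × Set X).2 = r.2 := by rw [he]
      exact this.symm
    · simp
  rcases hsplt.2 with ha | hb | hcc
  · have hsub : q.1 ∪ H ⊆ r.1 := by rw [← hqH]; exact ha
    refine ⟨⟨fun y hy => hsub (Or.inl hy), ?_⟩, fun y hy => Or.inl (hsub hy), Or.inr hsub⟩
    intro hrq
    have hx1 : x ∈ q.1 := hrq (hsub (Or.inr hx))
    have : x ∈ q.1 ∩ q.2 := ⟨hx1, hxq2⟩
    rw [hq2] at this; exact this
  · exact absurd hb hnb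
  · obtain ⟨hss, h2, -⟩ := hcc
    have hr2H : r.2 = H := by rw [← h2, hqH]
    refine ⟨hss, ?_, Or.inl hr2H⟩
    intro y hy
    rcases hy with hy | hy
    · exact Or.inl (hss.1 hy)
    · exact Or.inr (by rw [hr2H]; exact hy)

lemma parent_unique (h : OneNestedCompatible 𝒮) {r r' q : Set X × Set X} {H : Set X}
    (hc : SPCovers 𝒮 r q) (hc' : SPCovers 𝒮 r' q) (hqH : q.2 = H) (hH : H ≠ ∅) :
    r = r' := by
  by_contra hne
  obtain ⟨hsub, hsub2, -⟩ := cover_props h hc hqH hH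
  obtain ⟨hsub', hsub2', -⟩ := cover_props h hc' hqH hH
  have hsps := h.1
  have hnc4 := h.2.2.2.2.1
  have hq1 : q.1 ≠ ∅ := (hsps q hc.2.1).1
  obtain ⟨y, hy⟩ := my_wit hq1
  obtain ⟨x, hx⟩ := my_wit hH
  rcases hnc4 r hc.1 r' hc'.1 hne with ⟨h1,-⟩|⟨-,h2,-⟩|⟨-,-,h3,-⟩|⟨-,-,-,h4⟩
  · exact hc'.2.2.2 ⟨r, hc.1, hc.2.2.1, h1⟩
  · exact hc.2.2.2 ⟨r', hc'.1, hc'.2.2.1, h2⟩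
  · have : x ∈ (r.1 ∪ r.2) ∩ (r'.1 ∪ r'.2) := ⟨hsub2 (Or.inr hx), hsub2' (Or.inr hx)⟩
    rw [h3] at this; exact this
  · have : y ∈ r.1 ∩ r'.1 := ⟨hsub.1 hy, hsub'.1 hy⟩
    rw [h4.1] at this; exact this

lemma cross (h : OneNestedCompatible 𝒮) {q q' r : Set X × Set X} {H : Set X} (hH : H ≠ ∅)
    (hq : q ∈ 𝒮) (hq' : q' ∈ 𝒮) (hr : r ∈ 𝒮)
    (hq2 : q.2 = H) (hq'2 : q'.2 = H) (hr2 : r.2 ≠ H)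
    (hqr : q.1 ∪ H ⊆ r.1) (hdis : q.1 ∩ q'.1 = ∅) :
    q'.1 ∪ H ⊆ r.1 := by
  have hsps := h.1
  have hnc4 := h.2.2.2.2.1
  obtain ⟨hq'1, hq'22⟩ := hsps q' hq'
  obtain ⟨hq11, hq22⟩ := hsps q hq
  obtain ⟨hr1, hr22⟩ := hsps r hr
  obtain ⟨x, hx⟩ := my_wit hH
  obtain ⟨y, hy⟩ := my_wit hq11
  have hne : q' ≠ r := by
    intro he; apply hr2; rw [← he]; exact hq'2
  rcases hnc4 q' hq' r hr hne with ⟨h1,-⟩|⟨-,h2,-⟩|⟨-,-,h3,-⟩|⟨-,-,-,h4⟩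
  · rcases h1.2 with ha | hb | hcc
    · rw [← hq'2]; exact ha
    · exfalso
      have hx2 : x ∈ r.2 := hb (Or.inr (by rw [hq'2]; exact hx))
      have : x ∈ r.1 ∩ r.2 := ⟨hqr (Or.inr hx), hx2⟩
      rw [hr22] at this; exact this
    · exact absurd (by rw [← hcc.2.1, hq'2]) hr2
  · exfalso
    rcases h2.2 with ha | hb | hcc
    · have : y ∈ q.1 ∩ q'.1 := ⟨hy, ha (Or.inl (hqr (Or.inl hy)))⟩
      rw [hdis] at this; exact this
    · have hyH : y ∈ H := by rw [← hq'2]; exact hb (Or.inl (hqr (Or.inl hy)))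
      have : y ∈ q.1 ∩ q.2 := ⟨hy, by rw [hq2]; exact hyH⟩
      rw [hq22] at this; exact this
    · exact hr2 (by rw [hcc.2.1, hq'2])
  · exfalso
    have : x ∈ (q'.1 ∪ q'.2) ∩ (r.1 ∪ r.2) :=
      ⟨Or.inr (by rw [hq'2]; exact hx), Or.inl (hqr (Or.inr hx))⟩
    rw [h3] at this; exact this
  · exact absurd (by rw [← h4.2.1, hq'2]) hr2

end MyHelpers

section PathLemmas

variable {𝒮 : Set (Set X × Set X)} {S S' H : Set X} {L L' : List (Set X × Set X)}

lemma path_chain (hL : IsSPPath 𝒮 S H L) {i : ℕ} (hi : i + 1 < L.length) :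
    SPCovers 𝒮 (elt L i) (elt L (i+1)) := by
  rw [elt_eq (show i < L.length by omega), elt_eq hi]
  have := List.isChain_iff_getElem.mp hL.2.1 i (by omega)
  simpa using this

lemma path_chain' (hL : IsSPPath 𝒮 S H L) {a b : ℕ} (hab : a + 1 = b) (hb : b < L.length) :
    SPCovers 𝒮 (elt L a) (elt L b) := by
  subst hab; exact path_chain hL hb

lemma path_snd (hL : IsSPPath 𝒮 S H L) {i : ℕ} (h1 : 1 ≤ i) (h2 : i + 1 < L.length) :
    (elt L i).2 = H :=
  hL.2.2.2.1 i (elt L i) h1 h2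
    (by rw [elt_eq (show i < L.length by omega)]; exact List.getElem?_eq_getElem _)

lemma path_last (hL : IsSPPath 𝒮 S H L) : elt L (L.length - 1) = ((H, ∅) : Set X × Set X) := by
  have hn := hL.1
  have h := hL.2.2.1
  rw [List.getLast?_eq_getElem?, List.getElem?_eq_getElem (show L.length - 1 < L.length by omega)] at h
  rw [elt_eq (show L.length - 1 < L.length by omega)]
  exact Option.some_injective _ h

lemma path_head (hL : IsSPPath 𝒮 S H L) : S ∪ H ⊆ (elt L 0).1 ∧ (elt L 0).2 ≠ H := by
  have hn := hL.1
  obtain ⟨p, hp, h1, h2⟩ := hL.2.2.2.2.2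
  rw [List.head?_eq_getElem?, List.getElem?_eq_getElem (show 0 < L.length by omega)] at hp
  have hpe : p = elt L 0 := by
    rw [elt_eq (show 0 < L.length by omega)]
    exact (Option.some_injective _ hp).symm
  rw [← hpe]; exact ⟨h1, h2⟩

lemma path_mem (hL : IsSPPath 𝒮 S H L) {i : ℕ} (hi : i < L.length) : elt L i ∈ 𝒮 := by
  have hn := hL.1
  rcases lt_or_ge (i+1) L.length with hlt | hge
  · exact (path_chain hL hlt).1
  · have hi' : i = L.length - 2 + 1 := by omega
    rw [hi']
    exact (path_chain hL (show L.length - 2 + 1 < L.length by omega)).2.1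

lemma path_mono (h : OneNestedCompatible 𝒮) (hL : IsSPPath 𝒮 S H L) (hH : H ≠ ∅) :
    ∀ j, j + 1 < L.length → ∀ i, 1 ≤ i → i ≤ j → (elt L j).1 ⊆ (elt L i).1 := by
  intro j
  induction j with
  | zero => intro _ i h1 h2; omega
  | succ n ih =>
    intro hj i h1 h2
    rcases eq_or_lt_of_le h2 with rfl | hlt
    · exact subset_rfl
    · have hsub : (elt L (n+1)).1 ⊆ (elt L n).1 :=
        (cover_props h (path_chain hL (show n + 1 < L.length by omega))
          (path_snd hL (by omega) hj) hH).1.subset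
      exact hsub.trans (ih (by omega) i h1 (by omega))

lemma paths_eq_aux (h : OneNestedCompatible 𝒮) (hH : H ≠ ∅)
    (hL : IsSPPath 𝒮 S H L) (hL' : IsSPPath 𝒮 S' H L')
    (hll : L.length ≤ L'.length)
    {i j : ℕ} (hi1 : 1 ≤ i) (hi2 : i + 1 < L.length) (hj1 : 1 ≤ j) (hj2 : j + 1 < L'.length)
    (hint : (elt L i).1 ∩ (elt L' j).1 ≠ ∅) : L = L' := by
  have hn3 : 3 ≤ L.length := hL.1
  have hn3' : 3 ≤ L'.length := hL'.1
  have hnc5 := h.2.2.2.2.2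
  have hpmem : elt L i ∈ 𝒮 := path_mem hL (by omega)
  have hp'mem : elt L' j ∈ 𝒮 := path_mem hL' (by omega)
  have hpH : (elt L i).2 = H := path_snd hL hi1 hi2
  have hp'H : (elt L' j).2 = H := path_snd hL' hj1 hj2
  obtain ⟨c, hcmem, hc2, hpc, hp'c⟩ :
      ∃ c, c ∈ 𝒮 ∧ c.2 = H ∧ (elt L i).1 ⊆ c.1 ∧ (elt L' j).1 ⊆ c.1 := by
    rcases eq_or_ne (elt L i) (elt L' j) with hpp | hpp
    · exact ⟨elt L' j, hp'mem, hp'H, by rw [hpp], subset_rfl⟩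
    · rcases interior_rel h hpmem hp'mem hpH hp'H hH hpp with hd | hlt | hgt
      · exact absurd hd hint
      · exact ⟨elt L' j, hp'mem, hp'H, hlt.subset, subset_rfl⟩
      · exact ⟨elt L i, hpmem, hpH, subset_rfl, hgt.subset⟩
  have hbmem : elt L (L.length - 2) ∈ 𝒮 := path_mem hL (by omega)
  have hb'mem : elt L' (L'.length - 2) ∈ 𝒮 := path_mem hL' (by omega)
  have hbH : (elt L (L.length - 2)).2 = H := path_snd hL (by omega) (by omega)
  have hb'H : (elt L' (L'.length - 2)).2 = H := path_snd hL' (by omega) (by omega)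
  have hcovbot : SPCovers 𝒮 (elt L (L.length - 2)) ((H, ∅) : Set X × Set X) := by
    have := path_chain' hL (show L.length - 2 + 1 = L.length - 1 by omega) (by omega)
    rwa [path_last hL] at this
  have hcovbot' : SPCovers 𝒮 (elt L' (L'.length - 2)) ((H, ∅) : Set X × Set X) := by
    have := path_chain' hL' (show L'.length - 2 + 1 = L'.length - 1 by omega) (by omega)
    rwa [path_last hL'] at this
  have hbot : elt L (L.length - 2) = elt L' (L'.length - 2) := by
    by_contra hne
    have hsplt_bot : ∀ b : Set X × Set X, b.2 = H → splt ((H, ∅) : Set X × Set X) b := by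
      intro b hb2
      refine ⟨?_, Or.inr (Or.inl ?_)⟩
      · intro he
        apply hH
        rw [← hb2, ← he]
      · rw [hb2]; simp
    rcases interior_rel h hbmem hb'mem hbH hb'H hH hne with hd | hlt | hgt
    · apply hnc5
      refine ⟨_, hbmem, _, hb'mem, c, hcmem, by rw [hbH, hb'H], by rw [hb'H, hc2],
        by rw [hbH]; exact hH, hd, Or.inl (Set.union_subset ?_ ?_)⟩
      · exact (path_mono h hL hH (L.length - 2) (by omega) i hi1 (by omega)).trans hpc
      · exact (path_mono h hL' hH (L'.length - 2) (by omega) j hj1 (by omega)).trans hp'c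
    · exact hcovbot'.2.2.2 ⟨elt L (L.length - 2), hbmem, hsplt_bot _ hbH,
        ⟨hne, Or.inr (Or.inr ⟨hlt, by rw [hbH, hb'H], by rw [hb'H]; exact hH⟩)⟩⟩
    · exact hcovbot.2.2.2 ⟨elt L' (L'.length - 2), hb'mem, hsplt_bot _ hb'H,
        ⟨Ne.symm hne, Or.inr (Or.inr ⟨hgt, by rw [hb'H, hbH], by rw [hbH]; exact hH⟩)⟩⟩
  have key : ∀ t, t ≤ L.length - 2 → t ≤ L'.length - 2 →
      elt L (L.length - 2 - t) = elt L' (L'.length - 2 - t) := by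
    intro t
    induction t with
    | zero => intro _ _; simpa using hbot
    | succ s ih =>
      intro h1 h2
      have heq := ih (by omega) (by omega)
      have hcs : SPCovers 𝒮 (elt L (L.length - 2 - (s+1))) (elt L (L.length - 2 - s)) :=
        path_chain' hL (by omega) (by omega)
      have hcs' : SPCovers 𝒮 (elt L' (L'.length - 2 - (s+1))) (elt L' (L'.length - 2 - s)) :=
        path_chain' hL' (by omega) (by omega)
      rw [← heq] at hcs'
      exact parent_unique h hcs hcs' (path_snd hL (by omega) (by omega)) hH
  have hlen : L.length = L'.length := by
    by_contra hnel
    have hlt : L.length < L'.length := by omega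
    have hkey := key (L.length - 2) le_rfl (by omega)
    rw [show L.length - 2 - (L.length - 2) = 0 by omega] at hkey
    exact (path_head hL).2 (by rw [hkey]; exact path_snd hL' (by omega) (by omega))
  apply List.ext_getElem hlen
  intro k hk hk'
  rw [← elt_eq hk, ← elt_eq hk']
  by_cases hkl : k = L.length - 1
  · rw [hkl, path_last hL, show L.length - 1 = L'.length - 1 by omega, path_last hL']
  · have hk2 : k ≤ L.length - 2 := by omega
    have hkey := key (L.length - 2 - k) (by omega) (by omega)
    rw [show L.length - 2 - (L.length - 2 - k) = k by omega,
        show L'.length - 2 - (L.length - 2 - k) = k by omega] at hkey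
    exact hkey

end PathLemmas

/-- If `𝒮` is 1-nested compatible, `(S,H), (S',H) ∈ 𝒮` with `H ≠ ∅`, and the
directed paths `P(S,H)` and `P(S',H)` do not coincide, then the first components of their
interior elements are pairwise disjoint and the two paths have the same first element. -/
theorem distinct_paths_disjoint_interiors {X : Type*} [Fintype X] [Nonempty X]
    (𝒮 : Set (Set X × Set X)) (h : OneNestedCompatible 𝒮)
    (S S' H : Set X) (hH : H ≠ ∅)
    (hmem : ((S, H) : Set X × Set X) ∈ 𝒮) (hmem' : ((S', H) : Set X × Set X) ∈ 𝒮)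
    (L L' : List (Set X × Set X))
    (hL : IsSPPath 𝒮 S H L) (hL' : IsSPPath 𝒮 S' H L') (hne : L ≠ L') :
    (∀ i j : ℕ, ∀ p p' : Set X × Set X,
      1 ≤ i → i + 1 < L.length → 1 ≤ j → j + 1 < L'.length →
      L[i]? = some p → L'[j]? = some p' → p.1 ∩ p'.1 = ∅) ∧
    L.head? = L'.head? := by
  have hn3 : 3 ≤ L.length := hL.1
  have hn3' : 3 ≤ L'.length := hL'.1
  have hdisj : ∀ i j : ℕ, ∀ p p' : Set X × Set X,
      1 ≤ i → i + 1 < L.length → 1 ≤ j → j + 1 < L'.length →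
      L[i]? = some p → L'[j]? = some p' → p.1 ∩ p'.1 = ∅ := by
    intro i j p p' hi1 hi2 hj1 hj2 hp hp'
    have hpe : p = elt L i := by
      rw [List.getElem?_eq_getElem (show i < L.length by omega)] at hp
      rw [elt_eq (show i < L.length by omega)]
      exact (Option.some_injective _ hp).symm
    have hp'e : p' = elt L' j := by
      rw [List.getElem?_eq_getElem (show j < L'.length by omega)] at hp'
      rw [elt_eq (show j < L'.length by omega)]
      exact (Option.some_injective _ hp').symm
    subst hpe hp'e
    by_contra hcon
    rcases le_total L.length L'.length with hll | hll
    · exact hne (paths_eq_aux h hH hL hL' hll hi1 hi2 hj1 hj2 hcon)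
    · exact hne (paths_eq_aux h hH hL' hL hll hj1 hj2 hi1 hi2
        (by rw [Set.inter_comm]; exact hcon)).symm
  refine ⟨hdisj, ?_⟩
  have hcov : SPCovers 𝒮 (elt L 0) (elt L 1) := path_chain hL (by omega)
  have hcov' : SPCovers 𝒮 (elt L' 0) (elt L' 1) := path_chain hL' (by omega)
  have hq2 : (elt L 1).2 = H := path_snd hL le_rfl (by omega)
  have hq'2 : (elt L' 1).2 = H := path_snd hL' le_rfl (by omega)
  have hr2 : (elt L 0).2 ≠ H := (path_head hL).2
  have hr'2 : (elt L' 0).2 ≠ H := (path_head hL').2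
  have hqr : (elt L 1).1 ∪ H ⊆ (elt L 0).1 := by
    rcases (cover_props h hcov hq2 hH).2.2 with h' | h'
    exacts [absurd h' hr2, h']
  have hq'r' : (elt L' 1).1 ∪ H ⊆ (elt L' 0).1 := by
    rcases (cover_props h hcov' hq'2 hH).2.2 with h' | h'
    exacts [absurd h' hr'2, h']
  have hdis : (elt L 1).1 ∩ (elt L' 1).1 = ∅ :=
    hdisj 1 1 _ _ le_rfl (by omega) le_rfl (by omega)
      (by rw [elt_eq (show 1 < L.length by omega)]; exact List.getElem?_eq_getElem _)
      (by rw [elt_eq (show 1 < L'.length by omega)]; exact List.getElem?_eq_getElem _)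
  have hheads : elt L 0 = elt L' 0 := by
    by_contra hne0
    have h1 : (elt L' 1).1 ∪ H ⊆ (elt L 0).1 :=
      cross h hH (path_mem hL (by omega)) (path_mem hL' (by omega)) hcov.1 hq2 hq'2 hr2 hqr hdis
    have h2 : (elt L 1).1 ∪ H ⊆ (elt L' 0).1 :=
      cross h hH (path_mem hL' (by omega)) (path_mem hL (by omega)) hcov'.1 hq'2 hq2 hr'2 hq'r'
        (by rw [Set.inter_comm]; exact hdis)
    obtain ⟨x, hx⟩ := my_wit hH
    have hnc4 := h.2.2.2.2.1
    have hsq'r : splt (elt L' 1) (elt L 0) :=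
      ⟨fun he => hr2 (by rw [← he]; exact hq'2), Or.inl (by rw [hq'2]; exact h1)⟩
    have hsqr' : splt (elt L 1) (elt L' 0) :=
      ⟨fun he => hr'2 (by rw [← he]; exact hq2), Or.inl (by rw [hq2]; exact h2)⟩
    rcases hnc4 (elt L 0) hcov.1 (elt L' 0) hcov'.1 hne0 with
      ⟨ha,-⟩|⟨-,hb,-⟩|⟨-,-,hc,-⟩|⟨-,-,-,hd⟩
    · exact hcov'.2.2.2 ⟨elt L 0, hcov.1, hsq'r, ha⟩
    · exact hcov.2.2.2 ⟨elt L' 0, hcov'.1, hsqr', hb⟩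
    · have : x ∈ ((elt L 0).1 ∪ (elt L 0).2) ∩ ((elt L' 0).1 ∪ (elt L' 0).2) :=
        ⟨Or.inl (hqr (Or.inr hx)), Or.inl (hq'r' (Or.inr hx))⟩
      rw [hc] at this; exact this
    · have : x ∈ (elt L 0).1 ∩ (elt L' 0).1 := ⟨hqr (Or.inr hx), hq'r' (Or.inr hx)⟩
      rw [hd.1] at this; exact this
  rw [List.head?_eq_getElem?, List.head?_eq_getElem?,
      List.getElem?_eq_getElem (show 0 < L.length by omega),
      List.getElem?_eq_getElem (show 0 < L'.length by omega),
      ← elt_eq (show 0 < L.length by omega), ← elt_eq (show 0 < L'.length by omega), hheads]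
end
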